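/- arXiv:2101.09756 — 2 statements merged into one kernel-verified Lean document; each statement's English description precedes it below -/
import Mathlib

section
/- Let γ̂ ∈ Γ(μ̂, ν̂) and let γ be the restriction of γ̂ to X × X. Then γ ∈ Π_≤(μ,ν), and, writing f₁ := dγ₁/dμ and f₂ := dγ₂/dν for the Radon–Nikodym densities (which exist since γ₁ ≤ μ and γ₂ ≤ ν), one has γ̂ = γ + ((1 − f₁)μ) ⊗ δ_ŝ + δ_ŝ ⊗ ((1 − f₂)ν) + γ(X×X)·δ_{(ŝ,ŝ)}. -/
open MeasureTheory

/-- The set `Π_≤(μ,ν)` of plans whose marginals are dominated by `μ` and `ν`. -/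
def PiLe {X : Type*} [MeasurableSpace X] (μ ν : Measure X) : Set (Measure (X × X)) :=
  {γ | γ.map Prod.fst ≤ μ ∧ γ.map Prod.snd ≤ ν}

/-- The isolated extra point `ŝ` of the one-point extension `X̂ := X ⊕ Unit` of `X`. -/
def shat (X : Type*) : X ⊕ Unit := Sum.inr ()

/-- The embedding of `X × X` into `X̂ × X̂`. -/
def prodInl (X : Type*) : X × X → (X ⊕ Unit) × (X ⊕ Unit) :=
  fun p => (Sum.inl p.1, Sum.inl p.2)

/-- The extended measure `μ̂ = μ + ν(X)·δ_ŝ` on `X̂ = X ⊕ Unit`. -/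
noncomputable def muHat {X : Type*} [MeasurableSpace X] (μ ν : Measure X) :
    Measure (X ⊕ Unit) :=
  μ.map Sum.inl + (ν Set.univ) • Measure.dirac (shat X)

/-- `Γ(μ̂,ν̂)`: couplings of `μ̂` and `ν̂` on `X̂ × X̂`. -/
def GammaHat {X : Type*} [MeasurableSpace X] (μ ν : Measure X) :
    Set (Measure ((X ⊕ Unit) × (X ⊕ Unit))) :=
  {γ | γ.map Prod.fst = muHat μ ν ∧ γ.map Prod.snd = muHat ν μ}

/-- The extension of `γ ∈ Π_≤(μ,ν)` to a coupling of `μ̂` and `ν̂`: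
`γ̂ = γ + ((1−f₁)μ) ⊗ δ_ŝ + δ_ŝ ⊗ ((1−f₂)ν) + γ(X×X)·δ_{(ŝ,ŝ)}`,
where `f₁ = dγ₁/dμ` and `f₂ = dγ₂/dν`. -/
noncomputable def extendPlan {X : Type*} [MeasurableSpace X] (μ ν : Measure X)
    (γ : Measure (X × X)) : Measure ((X ⊕ Unit) × (X ⊕ Unit)) :=
  γ.map (prodInl X)
    + ((μ.withDensity (fun x => 1 - (γ.map Prod.fst).rnDeriv μ x)).map Sum.inl).prod
        (Measure.dirac (shat X))
    + (Measure.dirac (shat X)).prod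
        ((ν.withDensity (fun x => 1 - (γ.map Prod.snd).rnDeriv ν x)).map Sum.inl)
    + (γ Set.univ) • Measure.dirac (shat X, shat X)

lemma measure_add_left_cancel' {α : Type*} [MeasurableSpace α] {a b c : Measure α}
    (hfin : a Set.univ ≠ ⊤) (h : a + b = a + c) : b = c := by
  ext s hs
  have h' := congrArg (fun m : Measure α => m s) h
  simp only [Measure.add_apply] at h'
  have ha : a s ≠ ⊤ :=
    fun htop => hfin (top_le_iff.1 (htop ▸ measure_mono (Set.subset_univ s)))
  exact (ENNReal.add_right_inj ha).1 h'

/-- if `γ̂ ∈ Γ(μ̂,ν̂)` and `γ` is the restriction of `γ̂` to `X × X`, then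
`γ ∈ Π_≤(μ,ν)` and `γ̂ = γ + ((1−f₁)μ)⊗δ_ŝ + δ_ŝ⊗((1−f₂)ν) + γ(X×X)·δ_{(ŝ,ŝ)}`. -/
theorem stmt6 {X : Type*} [MetricSpace X] [CompactSpace X] [MeasurableSpace X] [BorelSpace X]
    (μ ν : Measure X) [IsFiniteMeasure μ] [IsFiniteMeasure ν]
    (γhat : Measure ((X ⊕ Unit) × (X ⊕ Unit))) (hγhat : γhat ∈ GammaHat μ ν) :
    γhat.comap (prodInl X) ∈ PiLe μ ν ∧
    γhat = extendPlan μ ν (γhat.comap (prodInl X)) := by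
  classical
  obtain ⟨h1, h2⟩ := hγhat
  set A : Set (X ⊕ Unit) := Set.range Sum.inl with hAdef
  have hA : MeasurableSet A := measurableSet_range_inl
  have hsA : shat X ∉ A := by simp [hAdef, shat]
  have hAc : Aᶜ = {shat X} := by
    ext x
    cases x with
    | inl x => simp [hAdef, shat]
    | inr u => simp [hAdef, shat]
  have hinl : MeasurableEmbedding (Sum.inl : X → X ⊕ Unit) :=
    ⟨Sum.inl_injective, measurable_inl, fun s hs => measurableSet_inl_image.2 hs⟩
  have hf : MeasurableEmbedding (prodInl X) := hinl.prodMap hinl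
  have hfm : Measurable (prodInl X) := hf.measurable
  have hrange : Set.range (prodInl X) = A ×ˢ A := by
    ext ⟨a, b⟩
    simp only [Set.mem_range, Set.mem_prod, hAdef, prodInl, Prod.mk.injEq, Prod.exists]
    constructor
    · rintro ⟨x, y, hx, hy⟩
      exact ⟨⟨x, hx⟩, ⟨y, hy⟩⟩
    · rintro ⟨⟨x, hx⟩, ⟨y, hy⟩⟩
      exact ⟨x, y, hx, hy⟩
  set γ : Measure (X × X) := γhat.comap (prodInl X) with hγdef
  haveI : IsFiniteMeasure γhat := by
    constructor
    have huniv : γhat Set.univ = (γhat.map Prod.fst) Set.univ := by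
      rw [Measure.map_apply measurable_fst MeasurableSet.univ, Set.preimage_univ]
    rw [huniv, h1]
    have hμν : (muHat μ ν) Set.univ = μ Set.univ + ν Set.univ := by
      simp [muHat, Measure.map_apply measurable_inl MeasurableSet.univ]
    rw [hμν]
    exact ENNReal.add_lt_top.2 ⟨measure_lt_top μ _, measure_lt_top ν _⟩
  haveI : IsFiniteMeasure γ := by
    constructor
    rw [hγdef, hf.comap_apply]
    exact lt_of_le_of_lt (measure_mono (Set.subset_univ _)) (measure_lt_top γhat _)
  haveI hγ1fin : IsFiniteMeasure (γ.map Prod.fst) := Measure.isFiniteMeasure_map γ _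
  haveI hγ2fin : IsFiniteMeasure (γ.map Prod.snd) := Measure.isFiniteMeasure_map γ _
  set ρ₂ := γhat.restrict (A ×ˢ Aᶜ) with hρ₂def
  set ρ₃ := γhat.restrict (Aᶜ ×ˢ A) with hρ₃def
  set ρ₄ := γhat.restrict (Aᶜ ×ˢ Aᶜ) with hρ₄def
  have hP1 : γhat.restrict (A ×ˢ A) = γ.map (prodInl X) := by
    rw [hγdef, hf.map_comap, hrange]
  have hd1 : Disjoint (A ×ˢ A) (A ×ˢ Aᶜ) := by
    rw [Set.disjoint_left]
    rintro ⟨a, b⟩ ⟨-, hb⟩ ⟨-, hb'⟩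
    exact hb' hb
  have hd2 : Disjoint (Aᶜ ×ˢ A) (Aᶜ ×ˢ Aᶜ) := by
    rw [Set.disjoint_left]
    rintro ⟨a, b⟩ ⟨-, hb⟩ ⟨-, hb'⟩
    exact hb' hb
  have hd3 : Disjoint (A ×ˢ A) (Aᶜ ×ˢ A) := by
    rw [Set.disjoint_left]
    rintro ⟨a, b⟩ ⟨ha, -⟩ ⟨ha', -⟩
    exact ha' ha
  have hd4 : Disjoint (A ×ˢ Aᶜ) (Aᶜ ×ˢ Aᶜ) := by
    rw [Set.disjoint_left]
    rintro ⟨a, b⟩ ⟨ha, -⟩ ⟨ha', -⟩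
    exact ha' ha
  have huA : (A ×ˢ A) ∪ (A ×ˢ Aᶜ) = A ×ˢ (Set.univ : Set (X ⊕ Unit)) := by
    rw [← Set.prod_union, Set.union_compl_self]
  have huAc : (Aᶜ ×ˢ A) ∪ (Aᶜ ×ˢ Aᶜ) = Aᶜ ×ˢ (Set.univ : Set (X ⊕ Unit)) := by
    rw [← Set.prod_union, Set.union_compl_self]
  have huB : (A ×ˢ A) ∪ (Aᶜ ×ˢ A) = (Set.univ : Set (X ⊕ Unit)) ×ˢ A := by
    ext ⟨a, b⟩
    by_cases ha : a ∈ A <;> simp [ha]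
  have huBc : (A ×ˢ Aᶜ) ∪ (Aᶜ ×ˢ Aᶜ) = (Set.univ : Set (X ⊕ Unit)) ×ˢ Aᶜ := by
    ext ⟨a, b⟩
    by_cases ha : a ∈ A <;> simp [ha]
  -- the splitting of γhat into four pieces
  have hsplit : γhat = γ.map (prodInl X) + ρ₂ + ρ₃ + ρ₄ := by
    have hcomplset : (A ×ˢ (Set.univ : Set (X ⊕ Unit)))ᶜ = Aᶜ ×ˢ Set.univ := by
      ext ⟨a, b⟩; simp
    have hrA : γhat.restrict (A ×ˢ (Set.univ : Set (X ⊕ Unit)))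
        = γ.map (prodInl X) + ρ₂ := by
      rw [← hP1, ← Measure.restrict_union hd1 (hA.prod hA.compl), huA]
    have hrAc : γhat.restrict (Aᶜ ×ˢ (Set.univ : Set (X ⊕ Unit))) = ρ₃ + ρ₄ := by
      rw [← Measure.restrict_union hd2 (hA.compl.prod hA.compl), huAc]
    have h := Measure.restrict_add_restrict_compl (μ := γhat) (hA.prod MeasurableSet.univ)
    rw [hcomplset, hrA, hrAc] at h
    rw [← h]
    simp only [add_assoc]
  -- facts about map Sum.inl
  have hinlpre : (Sum.inl : X → X ⊕ Unit) ⁻¹' A = Set.univ := by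
    ext x; simp [hAdef]
  have hinlpreC : (Sum.inl : X → X ⊕ Unit) ⁻¹' Aᶜ = (∅ : Set X) := by
    ext x; simp [hAdef]
  have hmapinl_restrict : ∀ m : Measure X, (m.map Sum.inl).restrict A = m.map Sum.inl := by
    intro m
    ext s hs
    rw [Measure.restrict_apply hs, Measure.map_apply measurable_inl (hs.inter hA),
      Measure.map_apply measurable_inl hs, Set.preimage_inter, hinlpre, Set.inter_univ]
  have hmapinl_univ : ∀ m : Measure X, (m.map (Sum.inl : X → X ⊕ Unit)) Set.univ = m Set.univ := by
    intro m
    rw [Measure.map_apply measurable_inl MeasurableSet.univ, Set.preimage_univ]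
  have hdiracA : (Measure.dirac (shat X)).restrict A = 0 := by
    ext s hs
    rw [Measure.restrict_apply hs, Measure.dirac_apply' _ (hs.inter hA)]
    simp only [Measure.coe_zero, Pi.zero_apply]
    exact Set.indicator_of_notMem (fun h => hsA h.2) _
  have hpreFst : (Prod.fst : (X ⊕ Unit) × (X ⊕ Unit) → X ⊕ Unit) ⁻¹' A
      = A ×ˢ (Set.univ : Set (X ⊕ Unit)) := by
    ext ⟨a, b⟩; simp
  have hpreSnd : (Prod.snd : (X ⊕ Unit) × (X ⊕ Unit) → X ⊕ Unit) ⁻¹' A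
      = (Set.univ : Set (X ⊕ Unit)) ×ˢ A := by
    ext ⟨a, b⟩; simp
  have hmapfst : (γ.map (prodInl X)).map Prod.fst = (γ.map Prod.fst).map Sum.inl := by
    rw [Measure.map_map measurable_fst hfm, Measure.map_map measurable_inl measurable_fst]
    rfl
  have hmapsnd : (γ.map (prodInl X)).map Prod.snd = (γ.map Prod.snd).map Sum.inl := by
    rw [Measure.map_map measurable_snd hfm, Measure.map_map measurable_inl measurable_snd]
    rfl
  have hRμ : (muHat μ ν).restrict A = μ.map Sum.inl := by
    simp only [muHat]
    rw [Measure.restrict_add, hmapinl_restrict, Measure.restrict_smul, hdiracA, smul_zero,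
      add_zero]
  have hRν : (muHat ν μ).restrict A = ν.map Sum.inl := by
    simp only [muHat]
    rw [Measure.restrict_add, hmapinl_restrict, Measure.restrict_smul, hdiracA, smul_zero,
      add_zero]
  -- first marginal equation on A
  have hfsteq : (γ.map Prod.fst).map Sum.inl + ρ₂.map Prod.fst = μ.map Sum.inl := by
    have h1' := congrArg (fun m : Measure (X ⊕ Unit) => m.restrict A) h1
    rw [Measure.restrict_map measurable_fst hA, hRμ, hpreFst, ← huA,
      Measure.restrict_union hd1 (hA.prod hA.compl), hP1,
      Measure.map_add _ _ measurable_fst, hmapfst] at h1'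
    exact h1'
  have hsndeq : (γ.map Prod.snd).map Sum.inl + ρ₃.map Prod.snd = ν.map Sum.inl := by
    have h2' := congrArg (fun m : Measure (X ⊕ Unit) => m.restrict A) h2
    rw [Measure.restrict_map measurable_snd hA, hRν, hpreSnd, ← huB,
      Measure.restrict_union hd3 (hA.compl.prod hA), hP1,
      Measure.map_add _ _ measurable_snd, hmapsnd] at h2'
    exact h2'
  -- the marginals of γ are dominated
  have hle1 : γ.map Prod.fst ≤ μ := by
    rw [Measure.le_iff]
    intro s hs
    have e := congrArg (fun m : Measure (X ⊕ Unit) => m (Sum.inl '' s)) hfsteq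
    simp only [Measure.add_apply] at e
    rw [hinl.map_apply, hinl.map_apply, Set.preimage_image_eq s Sum.inl_injective] at e
    calc (γ.map Prod.fst) s ≤ (γ.map Prod.fst) s + (ρ₂.map Prod.fst) (Sum.inl '' s) :=
          le_self_add
      _ = μ s := e
  have hle2 : γ.map Prod.snd ≤ ν := by
    rw [Measure.le_iff]
    intro s hs
    have e := congrArg (fun m : Measure (X ⊕ Unit) => m (Sum.inl '' s)) hsndeq
    simp only [Measure.add_apply] at e
    rw [hinl.map_apply, hinl.map_apply, Set.preimage_image_eq s Sum.inl_injective] at e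
    calc (γ.map Prod.snd) s ≤ (γ.map Prod.snd) s + (ρ₃.map Prod.snd) (Sum.inl '' s) :=
          le_self_add
      _ = ν s := e
  -- Radon–Nikodym decompositions
  have hwd1 : μ = γ.map Prod.fst
      + μ.withDensity (fun x => 1 - (γ.map Prod.fst).rnDeriv μ x) := by
    have hac : γ.map Prod.fst ≪ μ := hle1.absolutelyContinuous
    have hrn : μ.withDensity ((γ.map Prod.fst).rnDeriv μ) = γ.map Prod.fst :=
      Measure.withDensity_rnDeriv_eq _ _ hac
    have hone : (fun x => (γ.map Prod.fst).rnDeriv μ x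
        + (1 - (γ.map Prod.fst).rnDeriv μ x)) =ᵐ[μ] (fun _ => 1) := by
      filter_upwards [Measure.rnDeriv_le_one_of_le hle1] with x hx
      exact add_tsub_cancel_of_le hx
    calc μ = μ.withDensity (fun _ => 1) := (MeasureTheory.withDensity_one (μ := μ)).symm
      _ = μ.withDensity (fun x => (γ.map Prod.fst).rnDeriv μ x
            + (1 - (γ.map Prod.fst).rnDeriv μ x)) := (withDensity_congr_ae hone).symm
      _ = μ.withDensity ((γ.map Prod.fst).rnDeriv μ)
            + μ.withDensity (fun x => 1 - (γ.map Prod.fst).rnDeriv μ x) :=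
          withDensity_add_left (Measure.measurable_rnDeriv _ _) _
      _ = _ := by rw [hrn]
  have hwd2 : ν = γ.map Prod.snd
      + ν.withDensity (fun x => 1 - (γ.map Prod.snd).rnDeriv ν x) := by
    have hac : γ.map Prod.snd ≪ ν := hle2.absolutelyContinuous
    have hrn : ν.withDensity ((γ.map Prod.snd).rnDeriv ν) = γ.map Prod.snd :=
      Measure.withDensity_rnDeriv_eq _ _ hac
    have hone : (fun x => (γ.map Prod.snd).rnDeriv ν x
        + (1 - (γ.map Prod.snd).rnDeriv ν x)) =ᵐ[ν] (fun _ => 1) := by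
      filter_upwards [Measure.rnDeriv_le_one_of_le hle2] with x hx
      exact add_tsub_cancel_of_le hx
    calc ν = ν.withDensity (fun _ => 1) := (MeasureTheory.withDensity_one (μ := ν)).symm
      _ = ν.withDensity (fun x => (γ.map Prod.snd).rnDeriv ν x
            + (1 - (γ.map Prod.snd).rnDeriv ν x)) := (withDensity_congr_ae hone).symm
      _ = ν.withDensity ((γ.map Prod.snd).rnDeriv ν)
            + ν.withDensity (fun x => 1 - (γ.map Prod.snd).rnDeriv ν x) :=
          withDensity_add_left (Measure.measurable_rnDeriv _ _) _
      _ = _ := by rw [hrn]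
  set w₁ : Measure X := μ.withDensity (fun x => 1 - (γ.map Prod.fst).rnDeriv μ x) with hw₁def
  set w₂ : Measure X := ν.withDensity (fun x => 1 - (γ.map Prod.snd).rnDeriv ν x) with hw₂def
  have hw₁fin : w₁ Set.univ ≠ ⊤ := by
    have := congrArg (fun m : Measure X => m Set.univ) hwd1
    simp only [Measure.add_apply] at this
    intro htop
    rw [htop] at this
    simp only [add_top] at this
    exact (measure_lt_top μ Set.univ).ne this
  have hw₂fin : w₂ Set.univ ≠ ⊤ := by
    have := congrArg (fun m : Measure X => m Set.univ) hwd2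
    simp only [Measure.add_apply] at this
    intro htop
    rw [htop] at this
    simp only [add_top] at this
    exact (measure_lt_top ν Set.univ).ne this
  -- identify the fst/snd-marginals of ρ₂, ρ₃
  have hρ₂fst : ρ₂.map Prod.fst = w₁.map Sum.inl := by
    apply measure_add_left_cancel' (a := (γ.map Prod.fst).map Sum.inl)
    · rw [hmapinl_univ]
      exact (measure_lt_top _ _).ne
    · rw [hfsteq]
      conv_lhs => rw [hwd1]
      rw [Measure.map_add _ _ measurable_inl]
  have hρ₃snd : ρ₃.map Prod.snd = w₂.map Sum.inl := by
    apply measure_add_left_cancel' (a := (γ.map Prod.snd).map Sum.inl)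
    · rw [hmapinl_univ]
      exact (measure_lt_top _ _).ne
    · rw [hsndeq]
      conv_lhs => rw [hwd2]
      rw [Measure.map_add _ _ measurable_inl]
  -- ρ₂ is (w₁.map inl) ⊗ δ_ŝ
  haveI hw₁fin' : IsFiniteMeasure w₁ := ⟨lt_top_iff_ne_top.2 hw₁fin⟩
  haveI hw₂fin' : IsFiniteMeasure w₂ := ⟨lt_top_iff_ne_top.2 hw₂fin⟩
  haveI : IsFiniteMeasure (w₁.map (Sum.inl : X → X ⊕ Unit)) := Measure.isFiniteMeasure_map _ _
  haveI : IsFiniteMeasure (w₂.map (Sum.inl : X → X ⊕ Unit)) := Measure.isFiniteMeasure_map _ _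
  have hρ₂eq : ρ₂ = (w₁.map Sum.inl).prod (Measure.dirac (shat X)) := by
    have hstep : ρ₂.map (fun p : (X ⊕ Unit) × (X ⊕ Unit) => (p.1, shat X)) = ρ₂ := by
      ext s hs
      rw [Measure.map_apply (measurable_fst.prodMk measurable_const) hs, hρ₂def,
        Measure.restrict_apply (((measurable_fst.prodMk measurable_const) hs)),
        Measure.restrict_apply hs]
      congr 1
      ext ⟨a, b⟩
      constructor
      · rintro ⟨hab, ha, hb⟩
        have hb' : b = shat X := by rw [hAc] at hb; exact hb
        subst hb'
        exact ⟨hab, ha, hb⟩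
      · rintro ⟨hab, ha, hb⟩
        have hb' : b = shat X := by rw [hAc] at hb; exact hb
        subst hb'
        exact ⟨hab, ha, hb⟩
    have h' : ρ₂ = (ρ₂.map Prod.fst).map (fun x : X ⊕ Unit => (x, shat X)) := by
      rw [Measure.map_map (g := fun x : X ⊕ Unit => (x, shat X))
        (measurable_id.prodMk measurable_const) measurable_fst]
      exact hstep.symm
    rw [h', hρ₂fst, ← Measure.prod_dirac]
  have hρ₃eq : ρ₃ = (Measure.dirac (shat X)).prod (w₂.map Sum.inl) := by
    have hstep : ρ₃.map (fun p : (X ⊕ Unit) × (X ⊕ Unit) => (shat X, p.2)) = ρ₃ := by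
      ext s hs
      rw [Measure.map_apply (measurable_const.prodMk measurable_snd) hs, hρ₃def,
        Measure.restrict_apply (((measurable_const.prodMk measurable_snd) hs)),
        Measure.restrict_apply hs]
      congr 1
      ext ⟨a, b⟩
      constructor
      · rintro ⟨hab, ha, hb⟩
        have ha' : a = shat X := by rw [hAc] at ha; exact ha
        subst ha'
        exact ⟨hab, ha, hb⟩
      · rintro ⟨hab, ha, hb⟩
        have ha' : a = shat X := by rw [hAc] at ha; exact ha
        subst ha'
        exact ⟨hab, ha, hb⟩
    have h' : ρ₃ = (ρ₃.map Prod.snd).map (fun x : X ⊕ Unit => (shat X, x)) := by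
      rw [Measure.map_map (g := fun x : X ⊕ Unit => (shat X, x))
        (measurable_const.prodMk measurable_id) measurable_snd]
      exact hstep.symm
    rw [h', hρ₃snd, ← Measure.dirac_prod]
  -- ρ₄ is a point mass at (ŝ,ŝ) of total mass γ(univ)
  have hsingle : Aᶜ ×ˢ Aᶜ = ({(shat X, shat X)} : Set ((X ⊕ Unit) × (X ⊕ Unit))) := by
    rw [hAc, Set.singleton_prod_singleton]
  have hρ₄eq : ρ₄ = γhat {(shat X, shat X)} • Measure.dirac (shat X, shat X) := by
    ext s hs
    rw [hρ₄def, Measure.restrict_apply hs, hsingle, Measure.smul_apply,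
      Measure.dirac_apply' _ hs, smul_eq_mul]
    by_cases hm : (shat X, shat X) ∈ s
    · rw [Set.inter_eq_right.mpr (Set.singleton_subset_iff.mpr hm),
        Set.indicator_of_mem hm, Pi.one_apply, mul_one]
    · rw [Set.inter_singleton_eq_empty.mpr hm, measure_empty,
        Set.indicator_of_notMem hm, mul_zero]
  have hγuniv : (γ.map Prod.fst) Set.univ = γ Set.univ := by
    rw [Measure.map_apply measurable_fst MeasurableSet.univ, Set.preimage_univ]
  have hpt : γhat {(shat X, shat X)} = γ Set.univ := by
    have e := congrArg (fun m : Measure (X ⊕ Unit) => m Aᶜ) h2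
    rw [Measure.map_apply measurable_snd hA.compl] at e
    have hpre : (Prod.snd : (X ⊕ Unit) × (X ⊕ Unit) → X ⊕ Unit) ⁻¹' Aᶜ
        = (A ×ˢ Aᶜ) ∪ (Aᶜ ×ˢ Aᶜ) := by
      rw [huBc]
      ext ⟨a, b⟩; simp
    rw [hpre, measure_union hd4 (hA.compl.prod hA.compl), hsingle] at e
    have hrhs : muHat ν μ Aᶜ = μ Set.univ := by
      simp only [muHat]
      rw [Measure.add_apply, Measure.map_apply measurable_inl hA.compl, hinlpreC,
        measure_empty, zero_add, Measure.smul_apply, Measure.dirac_apply' _ hA.compl]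
      rw [hAc]
      simp
    rw [hrhs] at e
    have hw : γhat (A ×ˢ Aᶜ) = w₁ Set.univ := by
      have e1 : γhat (A ×ˢ Aᶜ) = ρ₂ Set.univ := by
        rw [hρ₂def, Measure.restrict_apply MeasurableSet.univ, Set.univ_inter]
      have e2 : ρ₂ Set.univ = (ρ₂.map Prod.fst) Set.univ := by
        rw [Measure.map_apply measurable_fst MeasurableSet.univ, Set.preimage_univ]
      rw [e1, e2, hρ₂fst, hmapinl_univ]
    rw [hw] at e
    have hdecuniv : μ Set.univ = (γ.map Prod.fst) Set.univ + w₁ Set.univ := by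
      have := congrArg (fun m : Measure X => m Set.univ) hwd1
      simpa only [Measure.add_apply] using this
    rw [hdecuniv, add_comm ((γ.map Prod.fst) Set.univ) (w₁ Set.univ)] at e
    have := (ENNReal.add_right_inj hw₁fin).1 e
    rw [this, hγuniv]
  refine ⟨⟨hle1, hle2⟩, ?_⟩
  rw [hsplit, hρ₂eq, hρ₃eq, hρ₄eq, hpt]
  rfl
end

section
/- For every admissible α one has ET̃_λ^α(μ,ν) = b·∑_{v∈V∖{r}} ω_{e(v)} |μ(Λ(v)) − ν(Λ(v))| − (bλ/2)(μ(V) + ν(V)) + (w_i(r) + bλ/2 − α)·|μ(V) − ν(V)|, where i = 1 if μ(V) ≥ ν(V) and i = 2 if μ(V) < ν(V). In particular, the map α ↦ ET̃_λ^α(μ,ν) is nonincreasing and |ET̃_λ^{α₁}(μ,ν) − ET̃_λ^{α₂}(μ,ν)| = |α₁ − α₂|·|μ(V) − ν(V)| for all admissible α₁, α₂. -/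
open SimpleGraph

/-- The unique path (as a walk) from `x` to `y` in a tree `G`. -/
noncomputable def treePath {V : Type*} {G : SimpleGraph V} (hG : G.IsTree) (x y : V) :
    G.Walk x y :=
  (hG.existsUnique_path x y).exists.choose

/-- The tree metric `d_T x y`: the sum of the lengths of the edges on the unique path
from `x` to `y`. -/
noncomputable def treeDist {V : Type*} {G : SimpleGraph V} (hG : G.IsTree)
    (ω : Sym2 V → ℝ) (x y : V) : ℝ :=
  ((treePath hG x y).edges.map ω).sum

/-- The parent of a vertex `v` in the tree rooted at `r`: its neighbor on the unique path
from `r` to `v` (i.e. the vertex preceding `v` on that path). -/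
noncomputable def treeParent {V : Type*} {G : SimpleGraph V} (hG : G.IsTree) (r v : V) : V :=
  (treePath hG r v).reverse.getVert 1

/-- The edge `e(v)` joining a (non-root) vertex `v` to its parent. -/
noncomputable def edgeToParent {V : Type*} {G : SimpleGraph V} (hG : G.IsTree) (r v : V) :
    Sym2 V :=
  s(treeParent hG r v, v)

/-- The set of vertices lying on the unique path from `r` to `x`. -/
noncomputable def pathVerts {V : Type*} [DecidableEq V] {G : SimpleGraph V} (hG : G.IsTree)
    (r x : V) : Finset V :=
  (treePath hG r x).support.toFinset

/-- The subtree `Λ(v)` below `v`: all vertices `u` such that `v` lies on the unique path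
from the root `r` to `u`. -/
noncomputable def subtreeBelow {V : Type*} [DecidableEq V] [Fintype V] {G : SimpleGraph V}
    (hG : G.IsTree) (r v : V) : Finset V :=
  Finset.univ.filter (fun u => v ∈ (treePath hG r u).support)
/-- The family `𝕃_α` of test functions on the tree: functions of the form
`f(x) = s + ∑_{v on the path r→x, v ≠ r} ω_{e(v)} g(v)` with
`−w₂(r) − bλ/2 + α ≤ s ≤ w₁(r) + bλ/2 − α` and `|g| ≤ b`. -/
def Lalpha {V : Type*} [Fintype V] [DecidableEq V] {G : SimpleGraph V} (hG : G.IsTree)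
    (r : V) (ω : Sym2 V → ℝ) (b lam w1r w2r α : ℝ) : Set (V → ℝ) :=
  {f | ∃ (s : ℝ) (g : V → ℝ),
    (-w2r - b * lam / 2 + α ≤ s ∧ s ≤ w1r + b * lam / 2 - α) ∧
    (∀ v : V, v ≠ r → |g v| ≤ b) ∧
    ∀ x : V, f x = s + ∑ v ∈ (pathVerts hG r x).erase r, ω (edgeToParent hG r v) * g v}

/-- The regularized entropy partial transport value
`ET̃_λ^α(μ,ν) = sup{ ∑_x f(x)(μ(x) − ν(x)) : f ∈ 𝕃_α } − (bλ/2)(μ(V) + ν(V))`. -/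
noncomputable def ETtilde {V : Type*} [Fintype V] [DecidableEq V] {G : SimpleGraph V}
    (hG : G.IsTree) (r : V) (ω : Sym2 V → ℝ) (b lam w1r w2r α : ℝ) (μ ν : V → ℝ) : ℝ :=
  sSup {t : ℝ | ∃ f ∈ Lalpha hG r ω b lam w1r w2r α,
      t = ∑ x : V, f x * (μ x - ν x)}
    - b * lam / 2 * ((∑ v : V, μ v) + ∑ v : V, ν v)

/-- For non-root `v`, the edge to the parent is an actual edge of the tree. -/
lemma edgeToParent_mem {V : Type*} {G : SimpleGraph V} (hG : G.IsTree) {r v : V} (h : v ≠ r) :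
    edgeToParent hG r v ∈ G.edgeSet := by
  have hlen : (treePath hG r v).length ≠ 0 := by
    intro h0
    apply h
    have h1 := (treePath hG r v).getVert_zero
    have h2 := (treePath hG r v).getVert_length
    rw [h0, h1] at h2
    exact h2.symm
  have hlt : 0 < (treePath hG r v).reverse.length := by
    rw [SimpleGraph.Walk.length_reverse]; omega
  have hadj := (treePath hG r v).reverse.adj_getVert_succ hlt
  rw [SimpleGraph.Walk.getVert_zero] at hadj
  exact (hadj.symm : G.Adj (treeParent hG r v) v)

/-- Key summation-exchange identity. -/
lemma key_sum {V : Type*} [Fintype V] [DecidableEq V] {G : SimpleGraph V}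
    (hG : G.IsTree) (r : V) (ω : Sym2 V → ℝ) (s : ℝ) (g m : V → ℝ) :
    ∑ x : V, (s + ∑ v ∈ (pathVerts hG r x).erase r, ω (edgeToParent hG r v) * g v) * m x
      = s * (∑ x : V, m x)
        + ∑ v ∈ Finset.univ.erase r, ω (edgeToParent hG r v) * g v *
            (∑ u ∈ subtreeBelow hG r v, m u) := by
  simp_rw [add_mul, Finset.sum_add_distrib, Finset.sum_mul]
  congr 1
  · rw [← Finset.mul_sum]
  · rw [Finset.sum_comm' (s' := fun v => subtreeBelow hG r v)
      (t' := Finset.univ.erase r) ?_]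
    · simp_rw [← Finset.mul_sum]
    · intro x v
      simp only [pathVerts, subtreeBelow, Finset.mem_erase, Finset.mem_filter,
        List.mem_toFinset, Finset.mem_univ, true_and, and_true]
      tauto

/-- closed form for the regularized entropy partial transport `ET̃_λ^α`,
monotonicity in `α`, and the exact difference formula. -/
theorem stmt15 {V : Type*} [Fintype V] [DecidableEq V]
    (G : SimpleGraph V) (hG : G.IsTree) (r : V)
    (ω : Sym2 V → ℝ) (hω : ∀ e ∈ G.edgeSet, 0 ≤ ω e)
    (b lam w1r w2r : ℝ) (hb : 0 ≤ b) (hlam : 0 ≤ lam) (hw1r : 0 ≤ w1r) (hw2r : 0 ≤ w2r)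
    (μ ν : V → ℝ) (hμ : ∀ v, 0 ≤ μ v) (hν : ∀ v, 0 ≤ ν v) :
    (∀ α : ℝ, 0 ≤ α → α ≤ (b * lam + w1r + w2r) / 2 →
      ETtilde hG r ω b lam w1r w2r α μ ν =
        b * ∑ v ∈ Finset.univ.erase r, ω (edgeToParent hG r v) *
            |(∑ u ∈ subtreeBelow hG r v, μ u) - ∑ u ∈ subtreeBelow hG r v, ν u|
          - b * lam / 2 * ((∑ v : V, μ v) + ∑ v : V, ν v)
          + ((if (∑ v : V, ν v) ≤ ∑ v : V, μ v then w1r else w2r) + b * lam / 2 - α) *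
              |(∑ v : V, μ v) - ∑ v : V, ν v|) ∧
    (∀ α₁ α₂ : ℝ, 0 ≤ α₁ → α₂ ≤ (b * lam + w1r + w2r) / 2 → α₁ ≤ α₂ →
      ETtilde hG r ω b lam w1r w2r α₂ μ ν ≤ ETtilde hG r ω b lam w1r w2r α₁ μ ν) ∧
    (∀ α₁ α₂ : ℝ, 0 ≤ α₁ → α₁ ≤ (b * lam + w1r + w2r) / 2 →
      0 ≤ α₂ → α₂ ≤ (b * lam + w1r + w2r) / 2 →
      |ETtilde hG r ω b lam w1r w2r α₁ μ ν - ETtilde hG r ω b lam w1r w2r α₂ μ ν|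
        = |α₁ - α₂| * |(∑ v : V, μ v) - ∑ v : V, ν v|) := by
  have hedge : ∀ v : V, v ≠ r → 0 ≤ ω (edgeToParent hG r v) :=
    fun v hv => hω _ (edgeToParent_mem hG hv)
  set D : ℝ := (∑ v : V, μ v) - ∑ v : V, ν v with hD
  set Δ : V → ℝ := fun v => (∑ u ∈ subtreeBelow hG r v, μ u) - ∑ u ∈ subtreeBelow hG r v, ν u
    with hΔ
  have hsum : ∀ (s : ℝ) (g : V → ℝ),
      ∑ x : V, (s + ∑ v ∈ (pathVerts hG r x).erase r, ω (edgeToParent hG r v) * g v)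
          * (μ x - ν x)
        = s * D + ∑ v ∈ Finset.univ.erase r, ω (edgeToParent hG r v) * g v * Δ v := by
    intro s g
    rw [key_sum hG r ω s g (fun x => μ x - ν x)]
    rw [Finset.sum_sub_distrib]
    congr 1
    apply Finset.sum_congr rfl
    intro v _
    congr 1
    rw [Finset.sum_sub_distrib]
  have closed : ∀ α : ℝ, 0 ≤ α → α ≤ (b * lam + w1r + w2r) / 2 →
      ETtilde hG r ω b lam w1r w2r α μ ν =
        b * ∑ v ∈ Finset.univ.erase r, ω (edgeToParent hG r v) * |Δ v|
          - b * lam / 2 * ((∑ v : V, μ v) + ∑ v : V, ν v)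
          + ((if (∑ v : V, ν v) ≤ ∑ v : V, μ v then w1r else w2r) + b * lam / 2 - α) * |D| := by
    intro α hα0 hα1
    set U : ℝ := w1r + b * lam / 2 - α with hU
    set L : ℝ := -w2r - b * lam / 2 + α with hL
    have hLU : L ≤ U := by rw [hL, hU]; linarith
    set sstar : ℝ := if 0 ≤ D then U else L with hsstar
    set M : ℝ := sstar * D + b * ∑ v ∈ Finset.univ.erase r, ω (edgeToParent hG r v) * |Δ v|
      with hM
    have hgreat : IsGreatest {t : ℝ | ∃ f ∈ Lalpha hG r ω b lam w1r w2r α,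
        t = ∑ x : V, f x * (μ x - ν x)} M := by
      constructor
      · -- membership: optimal f
        refine ⟨fun x => sstar + ∑ v ∈ (pathVerts hG r x).erase r,
            ω (edgeToParent hG r v) * (if 0 ≤ Δ v then b else -b),
          ⟨sstar, fun v => if 0 ≤ Δ v then b else -b, ?_, ?_, fun x => rfl⟩, ?_⟩
        · rw [hsstar]
          split <;> constructor <;> linarith
        · intro v _
          dsimp only
          split <;> simp [abs_of_nonneg hb, abs_neg, hb]
        · rw [hsum]
          rw [hM, Finset.mul_sum]
          congr 1
          apply Finset.sum_congr rfl
          intro v _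
          by_cases h : 0 ≤ Δ v
          · rw [if_pos h, abs_of_nonneg h]; ring
          · rw [if_neg h, abs_of_neg (lt_of_not_ge h)]; ring
      · -- upper bound
        rintro t ⟨f, ⟨s, g, ⟨hs1, hs2⟩, hg, hf⟩, rfl⟩
        have : ∑ x : V, f x * (μ x - ν x)
            = s * D + ∑ v ∈ Finset.univ.erase r, ω (edgeToParent hG r v) * g v * Δ v := by
          rw [← hsum s g]
          apply Finset.sum_congr rfl
          intro x _
          rw [hf x]
        rw [this, hM]
        have h1 : s * D ≤ sstar * D := by
          rw [hsstar]
          by_cases h : 0 ≤ D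
          · rw [if_pos h]; exact mul_le_mul_of_nonneg_right hs2 h
          · rw [if_neg h]
            have hD0 : D ≤ 0 := le_of_not_ge h
            have hsL : L ≤ s := by rw [hL]; linarith
            nlinarith [mul_nonneg (sub_nonneg.mpr hsL) (neg_nonneg.mpr hD0)]
        have h2 : ∑ v ∈ Finset.univ.erase r, ω (edgeToParent hG r v) * g v * Δ v
            ≤ b * ∑ v ∈ Finset.univ.erase r, ω (edgeToParent hG r v) * |Δ v| := by
          rw [Finset.mul_sum]
          apply Finset.sum_le_sum
          intro v hv
          have hvr : v ≠ r := (Finset.mem_erase.mp hv).1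
          have hωv := hedge v hvr
          have hgv := hg v hvr
          have : g v * Δ v ≤ b * |Δ v| := by
            calc g v * Δ v ≤ |g v * Δ v| := le_abs_self _
            _ = |g v| * |Δ v| := abs_mul _ _
            _ ≤ b * |Δ v| := mul_le_mul_of_nonneg_right hgv (abs_nonneg _)
          calc ω (edgeToParent hG r v) * g v * Δ v
              = ω (edgeToParent hG r v) * (g v * Δ v) := by ring
            _ ≤ ω (edgeToParent hG r v) * (b * |Δ v|) :=
                mul_le_mul_of_nonneg_left this hωv
            _ = b * (ω (edgeToParent hG r v) * |Δ v|) := by ring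
        linarith
    have hsup := hgreat.csSup_eq
    have hstar : sstar * D
        = ((if (∑ v : V, ν v) ≤ ∑ v : V, μ v then w1r else w2r) + b * lam / 2 - α) * |D| := by
      rw [hsstar]
      by_cases h : (∑ v : V, ν v) ≤ ∑ v : V, μ v
      · have hD0 : 0 ≤ D := by rw [hD]; linarith
        rw [if_pos hD0, if_pos h, abs_of_nonneg hD0, hU]
      · have hD0 : ¬ 0 ≤ D := by rw [hD]; intro hh; exact h (by linarith)
        rw [if_neg hD0, if_neg h, abs_of_neg (lt_of_not_ge hD0), hL]
        ring
    rw [ETtilde, hsup, hM, hstar]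
    ring
  refine ⟨closed, ?_, ?_⟩
  · intro α₁ α₂ h1 h2 h12
    rw [closed α₁ h1 (le_trans h12 h2), closed α₂ (le_trans h1 h12) h2]
    have := mul_le_mul_of_nonneg_right
      (show (if (∑ v : V, ν v) ≤ ∑ v : V, μ v then w1r else w2r) + b * lam / 2 - α₂
          ≤ (if (∑ v : V, ν v) ≤ ∑ v : V, μ v then w1r else w2r) + b * lam / 2 - α₁ by linarith)
      (abs_nonneg D)
    linarith
  · intro α₁ α₂ h10 h11 h20 h21
    rw [closed α₁ h10 h11, closed α₂ h20 h21]
    have heq : (b * ∑ v ∈ Finset.univ.erase r, ω (edgeToParent hG r v) * |Δ v|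
          - b * lam / 2 * ((∑ v : V, μ v) + ∑ v : V, ν v)
          + ((if (∑ v : V, ν v) ≤ ∑ v : V, μ v then w1r else w2r) + b * lam / 2 - α₁) * |D|)
        - (b * ∑ v ∈ Finset.univ.erase r, ω (edgeToParent hG r v) * |Δ v|
          - b * lam / 2 * ((∑ v : V, μ v) + ∑ v : V, ν v)
          + ((if (∑ v : V, ν v) ≤ ∑ v : V, μ v then w1r else w2r) + b * lam / 2 - α₂) * |D|)
        = (α₂ - α₁) * |D| := by ring
    rw [heq, abs_mul, abs_abs, abs_sub_comm α₂ α₁]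
end
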